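/- Let ξ ∈ Mₘ(ℂ) ⊗ M_d(ℂ) be a density matrix (positive semidefinite, trace 1) and let η = (tr_m ⊗ id_d)(ξ) ∈ M_d(ℂ) be its partial trace over the first factor. Let γ ∈ M_k(ℂ) ⊗ M_d(ℂ) be any purification of η (a rank-one projection onto a unit vector h ∈ ℂ^k ⊗ ℂ^d with (tr_k ⊗ id_d)(γ) = η). Then there exists a completely positive trace-preserving map Φ : M_k(ℂ) → Mₘ(ℂ) such that (Φ ⊗ id_d)(γ) = ξ. -/

import Mathlib

open Matrix
open scoped ComplexOrder

lemma exists_pinv {d : ℕ} {G : Matrix (Fin d) (Fin d) ℂ} (hG : G.IsHermitian) :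
    ∃ Gp : Matrix (Fin d) (Fin d) ℂ,
      Gpᴴ = Gp ∧ G * Gp * G = G ∧ Gp * G * Gp = Gp ∧ G * Gp = Gp * G := by
  classical
  set U : Matrix (Fin d) (Fin d) ℂ := (hG.eigenvectorUnitary : Matrix (Fin d) (Fin d) ℂ) with hUdef
  have hU' : star U * U = 1 := (Matrix.mem_unitaryGroup_iff').mp hG.eigenvectorUnitary.2
  set f : Fin d → ℂ := fun i => ((hG.eigenvalues i : ℝ) : ℂ) with hf
  have hspec : G = U * diagonal f * star U := hG.spectral_theorem
  have key : ∀ a b : Fin d → ℂ,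
      (U * diagonal a * star U) * (U * diagonal b * star U)
        = U * diagonal (fun i => a i * b i) * star U := by
    intro a b
    calc (U * diagonal a * star U) * (U * diagonal b * star U)
        = U * (diagonal a * ((star U * U) * (diagonal b * star U))) := by
          simp only [mul_assoc]
      _ = U * diagonal (fun i => a i * b i) * star U := by
          rw [hU', one_mul, ← mul_assoc (diagonal a) (diagonal b) (star U),
            diagonal_mul_diagonal, ← mul_assoc]
  refine ⟨U * diagonal (fun i => (f i)⁻¹) * star U, ?_, ?_, ?_, ?_⟩
  · rw [conjTranspose_mul, conjTranspose_mul, diagonal_conjTranspose,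
      ← star_eq_conjTranspose, ← star_eq_conjTranspose U, star_star]
    have : star (fun i => (f i)⁻¹) = fun i => (f i)⁻¹ := by
      funext i
      simp [hf, star_inv₀, Complex.star_def, Complex.conj_ofReal]
    rw [this, mul_assoc]
  · rw [hspec, key, key]
    have : (fun i => f i * (f i)⁻¹ * f i) = f := by
      funext i
      rcases eq_or_ne (f i) 0 with h0 | h0
      · simp [h0]
      · field_simp
    rw [this]
  · rw [hspec, key, key]
    have : (fun i => (f i)⁻¹ * f i * (f i)⁻¹) = fun i => (f i)⁻¹ := by
      funext i
      rcases eq_or_ne (f i) 0 with h0 | h0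
      · simp [h0]
      · field_simp
    rw [this]
  · rw [hspec, key, key]
    have : (fun i => f i * (f i)⁻¹) = fun i => (f i)⁻¹ * f i := by
      funext i; ring
    rw [this]

lemma mul_proj_eq_self {α : Type*} [Fintype α] {d : ℕ}
    {Z : Matrix α (Fin d) ℂ} {P G : Matrix (Fin d) (Fin d) ℂ}
    (hZ : Zᴴ * Z = G) (hPherm : Pᴴ = P) (hGP : G * P = G) :
    Z * P = Z := by
  have h0 : (Z - Z * P)ᴴ * (Z - Z * P) = 0 := by
    simp only [conjTranspose_sub, conjTranspose_mul, hPherm, Matrix.sub_mul, Matrix.mul_sub]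
    rw [← Matrix.mul_assoc Zᴴ Z P, Matrix.mul_assoc P Zᴴ Z, Matrix.mul_assoc P Zᴴ (Z * P),
      ← Matrix.mul_assoc Zᴴ Z P, hZ, hGP]
    abel
  have := Matrix.conjTranspose_mul_self_eq_zero.mp h0
  exact (sub_eq_zero.mp this).symm

lemma psd_finset_sum {ι n : Type*} [Fintype n] (s : Finset ι) (f : ι → Matrix n n ℂ)
    (hf : ∀ i ∈ s, (f i).PosSemidef) : (∑ i ∈ s, f i).PosSemidef := by
  classical
  induction s using Finset.induction with
  | empty => simpa using (Matrix.PosSemidef.zero (n := n) (R := ℂ))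
  | @insert a s ha ih =>
    rw [Finset.sum_insert ha]
    exact (hf _ (Finset.mem_insert_self _ _)).add
      (ih fun i hi => hf i (Finset.mem_insert_of_mem hi))

/-- `Φ : M_k(ℂ) → M_m(ℂ)` is completely positive. -/
def IsCompletelyPositive {k m : ℕ}
    (Φ : Matrix (Fin k) (Fin k) ℂ →ₗ[ℂ] Matrix (Fin m) (Fin m) ℂ) : Prop :=
  ∀ (r : ℕ) (M : Matrix (Fin r × Fin k) (Fin r × Fin k) ℂ), M.PosSemidef →
    Matrix.PosSemidef (fun p q : Fin r × Fin m =>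
      Φ (fun s t => M (p.1, s) (q.1, t)) p.2 q.2)

/-- Let `ξ ∈ M_m ⊗ M_d` be a density matrix with partial trace `η = (tr_m ⊗ id_d)(ξ)`,
and let `γ = |h⟩⟨h| ∈ M_k ⊗ M_d` be a purification of `η` (rank-one projection onto a unit
vector `h` with `(tr_k ⊗ id_d)(γ) = η`).  Then there exists a completely positive trace
preserving map `Φ : M_k(ℂ) → M_m(ℂ)` with `(Φ ⊗ id_d)(γ) = ξ`. -/
theorem exists_cptp_of_purification {m d k : ℕ}
    (ξ : Matrix (Fin m × Fin d) (Fin m × Fin d) ℂ)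
    (hξ : ξ.PosSemidef) (hξtr : ξ.trace = 1)
    (h : Fin k × Fin d → ℂ) (hunit : ∑ p, h p * star (h p) = 1)
    (γ : Matrix (Fin k × Fin d) (Fin k × Fin d) ℂ)
    (hγ : ∀ p q, γ p q = h p * star (h q))
    (hpur : ∀ a b : Fin d, (∑ i : Fin k, γ (i, a) (i, b)) = ∑ i : Fin m, ξ (i, a) (i, b)) :
    ∃ Φ : Matrix (Fin k) (Fin k) ℂ →ₗ[ℂ] Matrix (Fin m) (Fin m) ℂ,
      IsCompletelyPositive Φ ∧ (∀ x, (Φ x).trace = x.trace) ∧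
      ∀ (i' j' : Fin m) (a b : Fin d),
        (Φ (fun i j => γ (i, a) (j, b))) i' j' = ξ (i', a) (j', b) := by
  classical
  -- m is positive
  have hm : Nonempty (Fin m) := by
    by_contra hne
    rw [not_nonempty_iff] at hne
    have : ξ.trace = 0 := by
      rw [Matrix.trace]
      haveI := hne
      simp
    rw [this] at hξtr
    exact one_ne_zero hξtr.symm
  obtain ⟨i₀⟩ := hm
  -- square root decomposition of ξ
  obtain ⟨S, hS⟩ : ∃ S : Matrix (Fin m × Fin d) (Fin m × Fin d) ℂ, ξ = Sᴴ * S := by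
    open scoped MatrixOrder in
    exact CStarAlgebra.nonneg_iff_eq_star_mul_self.mp hξ.nonneg
  -- basic matrices
  set H : Matrix (Fin k) (Fin d) ℂ := Matrix.of fun i a => h (i, a) with hHdef
  set G : Matrix (Fin d) (Fin d) ℂ := Hᴴ * H with hGdef
  have hGherm : G.IsHermitian := by
    rw [hGdef]; exact (Matrix.posSemidef_conjTranspose_mul_self H).1
  set Ψ : Matrix ((Fin m × Fin d) × Fin m) (Fin d) ℂ :=
    Matrix.of fun p a => star (S p.1 (p.2, a)) with hΨdef
  have hΨG : Ψᴴ * Ψ = G := by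
    ext a b
    have e1 : (Ψᴴ * Ψ) a b
        = ∑ i : Fin m, ∑ e : Fin m × Fin d, S e (i, a) * star (S e (i, b)) := by
      rw [Matrix.mul_apply, Fintype.sum_prod_type, Finset.sum_comm]
      simp [conjTranspose_apply, hΨdef]
    have e2 : ∀ i : Fin m,
        ∑ e : Fin m × Fin d, S e (i, a) * star (S e (i, b)) = ξ (i, b) (i, a) := by
      intro i
      rw [hS, Matrix.mul_apply]
      exact Finset.sum_congr rfl fun e _ => by rw [conjTranspose_apply]; ring
    have e3 : G a b = ∑ i : Fin k, star (h (i, a)) * h (i, b) := by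
      rw [hGdef, Matrix.mul_apply]
      simp [conjTranspose_apply, hHdef]
    rw [e1, e3]
    simp_rw [e2]
    have hp := hpur b a
    simp_rw [hγ] at hp
    rw [← hp]
    exact Finset.sum_congr rfl fun i _ => by ring
  -- pseudo inverse of G
  obtain ⟨Gp, hGpherm, hGGpG, hGpGGp, hGcomm⟩ := exists_pinv hGherm
  set P : Matrix (Fin d) (Fin d) ℂ := Gp * G with hPdef
  have hPherm : Pᴴ = P := by
    rw [hPdef, conjTranspose_mul, hGpherm, hGherm.eq, hGcomm]
  have hGP : G * P = G := by rw [hPdef, ← Matrix.mul_assoc, hGGpG]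
  have hHP : H * P = H := mul_proj_eq_self hGdef.symm hPherm hGP
  have hΨP : Ψ * P = Ψ := mul_proj_eq_self hΨG hPherm hGP
  -- the contraction W
  set W : Matrix ((Fin m × Fin d) × Fin m) (Fin k) ℂ := Ψ * Gp * Hᴴ with hWdef
  have hWH : W * H = Ψ := by
    rw [hWdef, Matrix.mul_assoc (Ψ * Gp) Hᴴ H, ← hGdef, Matrix.mul_assoc Ψ Gp G, ← hPdef, hΨP]
  have hWconj : Wᴴ = H * Gp * Ψᴴ := by
    rw [hWdef, conjTranspose_mul, conjTranspose_mul, conjTranspose_conjTranspose, hGpherm,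
      ← Matrix.mul_assoc]
  have hWW : Wᴴ * W = H * Gp * Hᴴ := by
    rw [hWconj, hWdef, ← Matrix.mul_assoc, ← Matrix.mul_assoc,
      Matrix.mul_assoc (H * Gp) Ψᴴ Ψ, hΨG, Matrix.mul_assoc H Gp G,
      Matrix.mul_assoc H (Gp * G) Gp, hGpGGp]
  have hPP : (H * Gp * Hᴴ) * (H * Gp * Hᴴ) = H * Gp * Hᴴ := by
    rw [← Matrix.mul_assoc, ← Matrix.mul_assoc, Matrix.mul_assoc (H * Gp) Hᴴ H, ← hGdef,
      Matrix.mul_assoc H Gp G, Matrix.mul_assoc H (Gp * G) Gp, hGpGGp]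
  set Q : Matrix (Fin k) (Fin k) ℂ := 1 - H * Gp * Hᴴ with hQdef
  have hQherm : Qᴴ = Q := by
    rw [hQdef, conjTranspose_sub, conjTranspose_one, conjTranspose_mul, conjTranspose_mul,
      conjTranspose_conjTranspose, hGpherm, ← Matrix.mul_assoc]
  have hQQ : Q * Q = Q := by
    rw [hQdef]
    calc (1 - H * Gp * Hᴴ) * (1 - H * Gp * Hᴴ)
        = 1 - H * Gp * Hᴴ - H * Gp * Hᴴ + (H * Gp * Hᴴ) * (H * Gp * Hᴴ) := by noncomm_ring
      _ = 1 - H * Gp * Hᴴ := by rw [hPP]; abel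
  have hQH : Q * H = 0 := by
    rw [hQdef, Matrix.sub_mul, Matrix.one_mul, Matrix.mul_assoc (H * Gp) Hᴴ H, ← hGdef,
      Matrix.mul_assoc H Gp G, ← hPdef, hHP, sub_self]
  -- Kraus operators
  set K : (Fin m × Fin d) ⊕ (Fin k) → Matrix (Fin m) (Fin k) ℂ :=
    Sum.elim (fun e => Matrix.of fun i s => W (e, i) s)
             (fun u => Matrix.of fun i s => if i = i₀ then Q u s else 0) with hKdef
  -- sum of Kᴴ K is 1
  have hsum : ∑ α : (Fin m × Fin d) ⊕ (Fin k), (K α)ᴴ * K α = 1 := by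
    rw [Fintype.sum_sum_type]
    have hA : ∑ e : Fin m × Fin d, (K (Sum.inl e))ᴴ * K (Sum.inl e) = Wᴴ * W := by
      ext s t
      rw [Matrix.sum_apply]
      have e0 : ∀ e, ((K (Sum.inl e))ᴴ * K (Sum.inl e)) s t
          = ∑ i : Fin m, star (W (e, i) s) * W (e, i) t := by
        intro e
        rw [Matrix.mul_apply]
        exact Finset.sum_congr rfl fun i _ => by simp [hKdef, conjTranspose_apply]
      simp_rw [e0]
      have e1 : (Wᴴ * W) s t
          = ∑ e : Fin m × Fin d, ∑ i : Fin m, star (W (e, i) s) * W (e, i) t := by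
        rw [Matrix.mul_apply, Fintype.sum_prod_type]
        exact Finset.sum_congr rfl fun e _ => Finset.sum_congr rfl fun i _ => by
          rw [conjTranspose_apply]
      rw [e1]
    have hB : ∑ u : Fin k, (K (Sum.inr u))ᴴ * K (Sum.inr u) = Q := by
      ext s t
      rw [Matrix.sum_apply]
      have e1 : ∀ u : Fin k, ((K (Sum.inr u))ᴴ * K (Sum.inr u)) s t
          = star (Q u s) * Q u t := by
        intro u
        rw [Matrix.mul_apply]
        simp [hKdef, conjTranspose_apply, apply_ite]
      simp_rw [e1]
      have e2 : ∑ u : Fin k, star (Q u s) * Q u t = (Qᴴ * Q) s t := by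
        rw [Matrix.mul_apply]
        exact Finset.sum_congr rfl fun u _ => by rw [conjTranspose_apply]
      rw [e2, hQherm, hQQ]
    rw [hA, hB, hWW, hQdef]
    abel
  -- the map Φ
  refine ⟨{ toFun := fun x => ∑ α : (Fin m × Fin d) ⊕ (Fin k), K α * x * (K α)ᴴ
            map_add' := by
              intro x y
              simp only [Matrix.mul_add, Matrix.add_mul]
              rw [Finset.sum_add_distrib]
            map_smul' := by
              intro c x
              simp only [Matrix.mul_smul, Matrix.smul_mul, RingHom.id_apply, Finset.smul_sum] },
        ?_, ?_, ?_⟩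
  · -- completely positive
    intro r M hM
    simp only [LinearMap.coe_mk, AddHom.coe_mk]
    set B : ((Fin m × Fin d) ⊕ Fin k) → Matrix (Fin r × Fin m) (Fin r × Fin k) ℂ :=
      fun α => Matrix.of fun p s => if p.1 = s.1 then K α p.2 s.2 else 0 with hBdef
    have heq : (fun p q : Fin r × Fin m =>
        (∑ α : (Fin m × Fin d) ⊕ (Fin k),
          K α * (show Matrix (Fin k) (Fin k) ℂ from fun s t => M (p.1, s) (q.1, t))
            * (K α)ᴴ) p.2 q.2)
        = ∑ α : (Fin m × Fin d) ⊕ (Fin k), B α * M * (B α)ᴴ := by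
      funext p q
      rw [Matrix.sum_apply, Matrix.sum_apply]
      refine Finset.sum_congr rfl fun α _ => ?_
      have hBM : ∀ t2 : Fin r × Fin k, (B α * M) p t2
          = ∑ s : Fin k, K α p.2 s * M (p.1, s) t2 := by
        intro t2
        rw [Matrix.mul_apply, Fintype.sum_prod_type]
        rw [Finset.sum_eq_single p.1]
        · exact Finset.sum_congr rfl fun s _ => by simp [hBdef]
        · intro s1 _ hs1
          apply Finset.sum_eq_zero
          intro s _
          simp [hBdef, Ne.symm hs1]
        · intro habs
          exact absurd (Finset.mem_univ p.1) habs
      have hrhs : (B α * M * (B α)ᴴ) p q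
          = ∑ t : Fin k, (∑ s, K α p.2 s * M (p.1, s) (q.1, t)) * star (K α q.2 t) := by
        rw [Matrix.mul_apply, Fintype.sum_prod_type]
        rw [Finset.sum_eq_single q.1]
        · refine Finset.sum_congr rfl fun t _ => ?_
          rw [hBM, conjTranspose_apply]
          have : (B α q (q.1, t)) = K α q.2 t := by simp [hBdef]
          rw [this]
        · intro t1 _ ht1
          apply Finset.sum_eq_zero
          intro t _
          rw [conjTranspose_apply]
          have : (B α q (t1, t)) = 0 := by simp [hBdef, Ne.symm ht1]
          rw [this, star_zero, mul_zero]
        · intro habs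
          exact absurd (Finset.mem_univ q.1) habs
      have hlhs : (K α * (show Matrix (Fin k) (Fin k) ℂ from fun s t => M (p.1, s) (q.1, t))
            * (K α)ᴴ) p.2 q.2
          = ∑ t : Fin k, (∑ s, K α p.2 s * M (p.1, s) (q.1, t)) * star (K α q.2 t) := by
        rw [Matrix.mul_apply]
        refine Finset.sum_congr rfl fun t _ => ?_
        rw [Matrix.mul_apply, conjTranspose_apply]
      exact hlhs.trans hrhs.symm
    rw [heq]
    exact psd_finset_sum _ _ fun α _ => hM.mul_mul_conjTranspose_same (B α)
  · -- trace preserving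
    intro x
    simp only [LinearMap.coe_mk, AddHom.coe_mk]
    rw [Matrix.trace_sum]
    have e1 : ∀ α, (K α * x * (K α)ᴴ).trace = ((K α)ᴴ * K α * x).trace := by
      intro α
      rw [Matrix.trace_mul_comm, ← Matrix.mul_assoc]
    simp_rw [e1]
    rw [← Matrix.trace_sum, ← Finset.sum_mul, hsum, one_mul]
  · -- evaluation on the purification
    intro i' j' a b
    simp only [LinearMap.coe_mk, AddHom.coe_mk]
    have hXeq : (fun i j => γ (i, a) (j, b))
        = Matrix.of fun i j => H i a * star (H j b) := by
      funext i j
      rw [hγ]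
      simp [hHdef]
    rw [hXeq, Matrix.sum_apply]
    have hfac : ∀ (A : Matrix (Fin m) (Fin k) ℂ),
        (A * (Matrix.of fun i j => H i a * star (H j b)) * Aᴴ) i' j'
          = (A * H) i' a * star ((A * H) j' b) := by
      intro A
      rw [Matrix.mul_apply]
      calc ∑ t, (A * (Matrix.of fun i j => H i a * star (H j b))) i' t * (Aᴴ) t j'
          = ∑ t, ∑ s, (A i' s * H s a) * (star (A j' t) * star (H t b)) := by
            refine Finset.sum_congr rfl fun t _ => ?_
            rw [Matrix.mul_apply, conjTranspose_apply, Finset.sum_mul]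
            refine Finset.sum_congr rfl fun s _ => ?_
            simp only [Matrix.of_apply]
            ring
        _ = (∑ s, A i' s * H s a) * ∑ t, star (A j' t) * star (H t b) := by
            rw [Finset.sum_mul_sum]
            rw [Finset.sum_comm]
        _ = (A * H) i' a * star ((A * H) j' b) := by
            rw [Matrix.mul_apply, Matrix.mul_apply]
            congr 1
            rw [star_sum]
            exact Finset.sum_congr rfl fun t _ => by rw [star_mul']
    simp_rw [hfac]
    rw [Fintype.sum_sum_type]
    have hinr : ∀ u : Fin k, K (Sum.inr u) * H = 0 := by
      intro u
      ext i x
      rw [Matrix.mul_apply]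
      by_cases hi : i = i₀
      · have : ∀ s, K (Sum.inr u) i s * H s x = Q u s * H s x := by
          intro s; simp [hKdef, hi]
        simp_rw [this]
        have : ∑ s, Q u s * H s x = (Q * H) u x := (Matrix.mul_apply).symm
        rw [this, hQH]
        simp
      · have : ∀ s, K (Sum.inr u) i s * H s x = 0 := by
          intro s; simp [hKdef, hi]
        simp [this]
    have hinl : ∀ e : Fin m × Fin d, K (Sum.inl e) * H = Matrix.of fun i x => Ψ (e, i) x := by
      intro e
      ext i x
      rw [Matrix.mul_apply]
      have : ∀ s, K (Sum.inl e) i s * H s x = W (e, i) s * H s x := by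
        intro s; simp [hKdef]
      simp_rw [this]
      have h1 : ∑ s, W (e, i) s * H s x = (W * H) (e, i) x := (Matrix.mul_apply).symm
      rw [h1, hWH]
      simp
    have hzero : ∑ u : Fin k,
        (K (Sum.inr u) * H) i' a * star ((K (Sum.inr u) * H) j' b) = 0 := by
      apply Finset.sum_eq_zero
      intro u _
      rw [hinr u]
      simp
    rw [hzero, add_zero]
    have hmain : ∑ e : Fin m × Fin d,
        (K (Sum.inl e) * H) i' a * star ((K (Sum.inl e) * H) j' b)
        = ∑ e : Fin m × Fin d, star (S e (i', a)) * S e (j', b) := by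
      refine Finset.sum_congr rfl fun e _ => ?_
      rw [hinl e]
      simp [hΨdef]
    rw [hmain, hS, Matrix.mul_apply]
    exact Finset.sum_congr rfl fun e _ => by rw [conjTranspose_apply]
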